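/- Let f : ℝ^n → ℝ be convex, differentiable and L-smooth with L > 0, let A ∈ ℝ^{p×n}, and suppose that for every y ∈ ℝ^p the maximum φ(y) = max_x {⟨A^T y, x⟩ − f(x)} is attained at some point x*(A^T y). Then φ is (λ_min⁺(A^T A)/L)-strongly convex along the range of A: for all y₁, y₂ ∈ ℝ^p with y₁ − y₂ ∈ range(A), φ(y₁) ≥ φ(y₂) + ⟨A·x*(A^T y₂), y₁ − y₂⟩ + (λ_min⁺(A^T A)/(2L))·‖y₁ − y₂‖₂². -/

import Mathlib

open RealInnerProductSpace Matrix

variable {m : ℕ}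

lemma inner_gradient_eq' {f : EuclideanSpace ℝ (Fin m) → ℝ} (x v : EuclideanSpace ℝ (Fin m)) :
    ⟪gradient f x, v⟫ = fderiv ℝ f x v := by
  simp [gradient, InnerProductSpace.toDual_symm_apply]

lemma gradient_eq_of_isMaxOn' {f : EuclideanSpace ℝ (Fin m) → ℝ} (hdiff : Differentiable ℝ f)
    (c x₀ : EuclideanSpace ℝ (Fin m))
    (hmax : IsMaxOn (fun x => ⟪c, x⟫ - f x) Set.univ x₀) : gradient f x₀ = c := by
  have hlm : IsLocalMax (fun x => ⟪c, x⟫ - f x) x₀ := hmax.isLocalMax Filter.univ_mem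
  have h0 := hlm.fderiv_eq_zero
  have h1 : fderiv ℝ (fun x => ⟪c, x⟫ - f x) x₀ = innerSL ℝ c - fderiv ℝ f x₀ := by
    have : fderiv ℝ (fun x => (innerSL ℝ c) x - f x) x₀ = innerSL ℝ c - fderiv ℝ f x₀ := by
      rw [fderiv_fun_sub (innerSL ℝ c).differentiableAt (hdiff x₀), (innerSL ℝ c).fderiv]
    simpa using this
  have h2 : innerSL ℝ c - fderiv ℝ f x₀ = 0 := by rw [← h1, h0]
  apply ext_inner_right ℝ
  intro v
  have h3 := congrArg (fun φ : _ →L[ℝ] ℝ => φ v) h2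
  simp only [ContinuousLinearMap.sub_apply, ContinuousLinearMap.zero_apply, innerSL_apply_apply] at h3
  rw [inner_gradient_eq']
  linarith
lemma descent' {f : EuclideanSpace ℝ (Fin m) → ℝ} {L : ℝ} (hL : 0 < L)
    (hdiff : Differentiable ℝ f)
    (hsmooth : ∀ x y : EuclideanSpace ℝ (Fin m),
      ‖gradient f x - gradient f y‖ ≤ L * ‖x - y‖)
    (x v : EuclideanSpace ℝ (Fin m)) :
    f (x + v) ≤ f x + ⟪gradient f x, v⟫ + L / 2 * ‖v‖ ^ 2 := by
  have hgrad_cont : Continuous (gradient f) := by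
    have : LipschitzWith (Real.toNNReal L) (gradient f) :=
      LipschitzWith.of_dist_le_mul fun a b => by
        simpa [dist_eq_norm, Real.coe_toNNReal L hL.le] using hsmooth a b
    exact this.continuous
  set g' : ℝ → ℝ := fun t => ⟪gradient f (x + t • v), v⟫ with hg'
  have hcont : Continuous g' := by
    apply Continuous.inner
    · exact hgrad_cont.comp (by continuity)
    · exact continuous_const
  have hderiv : ∀ t : ℝ, HasDerivAt (fun t : ℝ => f (x + t • v)) (g' t) t := by
    intro t
    have h1 : HasDerivAt (fun t : ℝ => x + t • v) v t := by
      simpa using ((hasDerivAt_id t).smul_const v).const_add x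
    have h2 := ((hdiff (x + t • v)).hasFDerivAt).comp_hasDerivAt t h1
    have hgt : g' t = fderiv ℝ f (x + t • v) v := by
      rw [hg']
      exact inner_gradient_eq' _ _
    rw [hgt]
    exact h2
  have key : f (x + v) - f x = ∫ t in (0:ℝ)..1, g' t := by
    have h := intervalIntegral.integral_eq_sub_of_hasDerivAt
      (fun t _ => hderiv t) (hcont.intervalIntegrable 0 1)
    simpa using h.symm
  have bound : ∀ t ∈ Set.Icc (0:ℝ) 1, g' t ≤ g' 0 + (L * ‖v‖ ^ 2) * t := by
    intro t ht
    have h1 : g' t - g' 0 = ⟪gradient f (x + t • v) - gradient f (x + (0:ℝ) • v), v⟫ := by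
      rw [inner_sub_left]
    have h2 : ⟪gradient f (x + t • v) - gradient f (x + (0:ℝ) • v), v⟫
        ≤ ‖gradient f (x + t • v) - gradient f (x + (0:ℝ) • v)‖ * ‖v‖ :=
      real_inner_le_norm _ _
    have h3 : ‖gradient f (x + t • v) - gradient f (x + (0:ℝ) • v)‖
        ≤ L * (t * ‖v‖) := by
      have h4 := hsmooth (x + t • v) (x + (0:ℝ) • v)
      have h5 : ‖(x + t • v) - (x + (0:ℝ) • v)‖ = t * ‖v‖ := by
        simp [norm_smul, abs_of_nonneg ht.1]
      rw [h5] at h4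
      exact h4
    have h6 : ‖gradient f (x + t • v) - gradient f (x + (0:ℝ) • v)‖ * ‖v‖
        ≤ L * (t * ‖v‖) * ‖v‖ := by
      apply mul_le_mul_of_nonneg_right h3 (norm_nonneg v)
    nlinarith [h1, h2]
  have int_le : (∫ t in (0:ℝ)..1, g' t) ≤ ∫ t in (0:ℝ)..1, (g' 0 + (L * ‖v‖ ^ 2) * t) := by
    apply intervalIntegral.integral_mono_on zero_le_one (hcont.intervalIntegrable 0 1)
    · exact (continuous_const.add (continuous_const.mul continuous_id)).intervalIntegrable 0 1
    · exact bound
  have int_eval : (∫ t in (0:ℝ)..1, (g' 0 + (L * ‖v‖ ^ 2) * t)) = g' 0 + L / 2 * ‖v‖ ^ 2 := by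
    rw [intervalIntegral.integral_add (f := fun _ => g' 0) (g := fun t : ℝ => L * ‖v‖ ^ 2 * t)
      (intervalIntegrable_const)
      ((continuous_const.mul continuous_id').intervalIntegrable 0 1),
      intervalIntegral.integral_const_mul, integral_id, intervalIntegral.integral_const]
    simp
    ring
  have hg0 : g' 0 = ⟪gradient f x, v⟫ := by simp [hg']
  rw [← hg0]
  linarith [key, int_le, int_eval]
lemma spectral' {n p : ℕ} (A : Matrix (Fin p) (Fin n) ℝ) (u : EuclideanSpace ℝ (Fin n)) :
    sInf (spectrum ℝ (Aᵀ * A) ∩ Set.Ioi 0) * ‖Matrix.toEuclideanLin A u‖ ^ 2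
      ≤ ‖Matrix.toEuclideanLin Aᵀ (Matrix.toEuclideanLin A u)‖ ^ 2 := by
  have hAT : Aᵀ = Aᴴ := (A.conjTranspose_eq_transpose_of_trivial).symm
  have hPSD : (Aᵀ * A).PosSemidef := by
    rw [hAT]; exact Matrix.posSemidef_conjTranspose_mul_self A
  have hM : (Aᵀ * A).IsHermitian := hPSD.1
  set μ := sInf (spectrum ℝ (Aᵀ * A) ∩ Set.Ioi 0) with hμ
  set b := hM.eigenvectorBasis with hb
  set lam := hM.eigenvalues with hlam
  set T := Matrix.toEuclideanLin A with hT
  set S := Matrix.toEuclideanLin (Aᵀ * A) with hS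
  have hcomp : ∀ w, Matrix.toEuclideanLin Aᵀ (T w) = S w := by
    intro w
    ext j
    simp [hT, hS, Matrix.toEuclideanLin_apply, Matrix.mulVec_mulVec]
  have hadj : ∀ (y : EuclideanSpace ℝ (Fin p)) (w : EuclideanSpace ℝ (Fin n)),
      ⟪Matrix.toEuclideanLin Aᵀ y, w⟫ = ⟪y, T w⟫ := by
    intro y w
    rw [hAT, Matrix.toEuclideanLin_conjTranspose_eq_adjoint]
    exact LinearMap.adjoint_inner_left _ w y
  have hsymm : ∀ v w : EuclideanSpace ℝ (Fin n), ⟪S v, w⟫ = ⟪v, S w⟫ :=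
    Matrix.isHermitian_iff_isSymmetric.mp hM
  have heig : ∀ i, S (b i) = lam i • b i := by
    intro i
    have h := hM.mulVec_eigenvectorBasis i
    ext j
    have := congrFun h j
    simpa [hS, Matrix.toEuclideanLin_apply] using this
  have expand : ∀ (i) (w : EuclideanSpace ℝ (Fin n)), ⟪b i, S w⟫ = lam i * ⟪b i, w⟫ := by
    intro i w
    rw [← hsymm, heig, real_inner_smul_left]
  have h1 : ⟪u, S u⟫ = ∑ i, lam i * ⟪u, b i⟫ ^ 2 := by
    rw [← b.sum_inner_mul_inner u (S u)]
    apply Finset.sum_congr rfl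
    intro i _
    rw [expand i u, real_inner_comm (b i) u]
    ring
  have h2 : ⟪S u, S u⟫ = ∑ i, (lam i * ⟪u, b i⟫) ^ 2 := by
    rw [← b.sum_inner_mul_inner (S u) (S u)]
    apply Finset.sum_congr rfl
    intro i _
    have e2 : ⟪b i, S u⟫ = lam i * ⟪u, b i⟫ := by
      rw [expand i u, real_inner_comm (b i) u]
    have e1 : ⟪S u, b i⟫ = lam i * ⟪u, b i⟫ := by
      rw [real_inner_comm, e2]
    rw [e1, e2]; ring
  have hTu : ‖T u‖ ^ 2 = ⟪u, S u⟫ := by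
    have e : ⟪S u, u⟫ = ⟪T u, T u⟫ := by
      rw [← hcomp]
      exact hadj (T u) u
    rw [← real_inner_self_eq_norm_sq, ← e, real_inner_comm]
  have hSu : ‖Matrix.toEuclideanLin Aᵀ (T u)‖ ^ 2 = ⟪S u, S u⟫ := by
    rw [hcomp, real_inner_self_eq_norm_sq]
  rw [hTu, hSu, h1, h2, Finset.mul_sum]
  apply Finset.sum_le_sum
  intro i _
  have hnn : (0:ℝ) ≤ lam i := hPSD.eigenvalues_nonneg i
  rcases hnn.eq_or_lt with h0 | hpos
  · rw [← h0]; simp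
  · have hμle : μ ≤ lam i := by
      apply csInf_le
      · exact ⟨0, fun x hx => le_of_lt hx.2⟩
      · exact ⟨hM.eigenvalues_mem_spectrum_real i, hpos⟩
    nlinarith [sq_nonneg (⟪u, b i⟫ : ℝ), sq_nonneg (lam i)]

/-- For convex `L`-smooth `f`, the dual function `φ(y) = max_x {⟨Aᵀy, x⟩ - f(x)}`
is `λ_min⁺(AᵀA)/L`-strongly convex along the range of `A`. -/
theorem dual_strong_convexity_on_range
    {n p : ℕ} (f : EuclideanSpace ℝ (Fin n) → ℝ) (L : ℝ) (hL : 0 < L)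
    (hconv : ConvexOn ℝ Set.univ f) (hdiff : Differentiable ℝ f)
    (hsmooth : ∀ x y : EuclideanSpace ℝ (Fin n),
      ‖gradient f x - gradient f y‖ ≤ L * ‖x - y‖)
    (A : Matrix (Fin p) (Fin n) ℝ)
    (xstar : EuclideanSpace ℝ (Fin p) → EuclideanSpace ℝ (Fin n))
    (hxstar : ∀ y, IsMaxOn (fun x => ⟪Matrix.toEuclideanLin Aᵀ y, x⟫ - f x) Set.univ
      (xstar y)) :
    ∀ y₁ y₂ : EuclideanSpace ℝ (Fin p),
      y₁ - y₂ ∈ LinearMap.range (Matrix.toEuclideanLin A) →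
      (⟪Matrix.toEuclideanLin Aᵀ y₂, xstar y₂⟫ - f (xstar y₂))
        + ⟪Matrix.toEuclideanLin A (xstar y₂), y₁ - y₂⟫
        + sInf (spectrum ℝ (Aᵀ * A) ∩ Set.Ioi 0) / (2 * L) * ‖y₁ - y₂‖ ^ 2
      ≤ ⟪Matrix.toEuclideanLin Aᵀ y₁, xstar y₁⟫ - f (xstar y₁) := by
  intro y₁ y₂ hrange
  obtain ⟨u, hu⟩ := hrange
  set μ := sInf (spectrum ℝ (Aᵀ * A) ∩ Set.Ioi 0) with hμ
  set T := Matrix.toEuclideanLin A with hT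
  set Tt := Matrix.toEuclideanLin Aᵀ with hTt
  set x₂ := xstar y₂ with hx₂
  set d := y₁ - y₂ with hd
  set w := Tt d with hw
  set h := L⁻¹ • w with hh
  have hadj : ∀ (y : EuclideanSpace ℝ (Fin p)) (z : EuclideanSpace ℝ (Fin n)),
      ⟪Tt y, z⟫ = ⟪y, T z⟫ := by
    intro y z
    have hAT : Aᵀ = Aᴴ := (A.conjTranspose_eq_transpose_of_trivial).symm
    rw [hTt, hAT, Matrix.toEuclideanLin_conjTranspose_eq_adjoint]
    exact LinearMap.adjoint_inner_left _ z y
  have hgrad : gradient f x₂ = Tt y₂ := gradient_eq_of_isMaxOn' hdiff _ _ (hxstar y₂)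
  -- step 1 : maximality at y₁
  have hA1 : ⟪Tt y₁, x₂ + h⟫ - f (x₂ + h) ≤ ⟪Tt y₁, xstar y₁⟫ - f (xstar y₁) :=
    hxstar y₁ (Set.mem_univ (x₂ + h))
  -- step 2 : descent lemma
  have hA2 : f (x₂ + h) ≤ f x₂ + ⟪Tt y₂, h⟫ + L / 2 * ‖h‖ ^ 2 := by
    rw [← hgrad]
    exact descent' hL hdiff hsmooth x₂ h
  -- step 3 : spectral inequality
  have hspec : μ * ‖d‖ ^ 2 ≤ ‖w‖ ^ 2 := by
    rw [hw, ← hu]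
    exact spectral' A u
  -- algebraic identities
  have hwdef : Tt y₁ = Tt y₂ + w := by
    rw [hw, hd, map_sub]; abel
  have e1 : ⟪Tt y₁, x₂ + h⟫
      = ⟪Tt y₂, x₂⟫ + ⟪w, x₂⟫ + ⟪Tt y₂, h⟫ + ⟪w, h⟫ := by
    rw [hwdef, inner_add_left, inner_add_right, inner_add_right]
    ring
  have e2 : ⟪w, x₂⟫ = ⟪T x₂, d⟫ := by
    rw [hw, hadj, real_inner_comm]
  have e3 : ⟪w, h⟫ = L⁻¹ * ‖w‖ ^ 2 := by
    rw [hh, real_inner_smul_right, real_inner_self_eq_norm_sq]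
  have e4 : ‖h‖ ^ 2 = (L⁻¹ * ‖w‖) ^ 2 := by
    rw [hh, norm_smul]
    rw [Real.norm_eq_abs, abs_of_pos (inv_pos.mpr hL)]
  have e5 : L⁻¹ * ‖w‖ ^ 2 - L / 2 * (L⁻¹ * ‖w‖) ^ 2 = ‖w‖ ^ 2 / (2 * L) := by
    field_simp
    ring
  have e6 : μ / (2 * L) * ‖d‖ ^ 2 ≤ ‖w‖ ^ 2 / (2 * L) := by
    rw [div_mul_eq_mul_div]
    apply div_le_div_of_nonneg_right hspec ?_ |>.trans_eq rfl
    positivity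
  have e7 : ⟪Tt y₁, x₂ + h⟫ - (f x₂ + ⟪Tt y₂, h⟫ + L / 2 * ‖h‖ ^ 2)
      = (⟪Tt y₂, x₂⟫ - f x₂) + ⟪T x₂, d⟫ + ‖w‖ ^ 2 / (2 * L) := by
    rw [e1, e2, e3, e4]
    field_simp
    ring
  linarith [hA1, hA2, e6, e7]
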